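/- For every x ∈ ℝ^{P(F)} and every G ⊆ F, the drift of the BitTorrent Markov chain equals the fluid vector field: α^G − δ x^F 1(G = F) − Σ_{A' ⊆ F} λ_{G,A'}(x) + Σ_{A ⊆ F} λ_{A,G}(x) − Σ_{A',B,B' ⊆ F} μ_{G,B}(x) D(G,A',B,B') + Σ_{A,B,B' ⊆ F} μ_{A,B}(x) D(A,G,B,B') = v^G(x). -/

import Mathlib

open Finset

/-- The fluid vector field `v` of the BitTorrent model, with components indexed by
subsets `A ⊆ F` (the full file `F` being `Finset.univ` of the chunk type `ι`). -/
noncomputable def vfield {ι : Type*} [Fintype ι] [DecidableEq ι]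
    (α : Finset ι → ℝ) (β γ δ : ℝ) (x : Finset ι → ℝ) (A : Finset ι) : ℝ :=
  α A
    - x A * (β * (∑ B ∈ univ.filter (fun B => A ⊂ B), x B)
             + γ * (∑ B ∈ univ.filter (fun B => ¬ A ⊆ B ∧ ¬ B ⊆ A), x B))
    + β * ∑ B ∈ univ.filter (fun B => A ⊆ B),
        (∑ a ∈ A, x (A.erase a)) * x B / (1 + ((B \ A).card : ℝ))
    + γ * ∑ B ∈ univ.filter (fun B => ¬ A ⊆ B),
        (∑ a ∈ A ∩ B, x (A.erase a)) * x B / (1 + ((B \ A).card : ℝ))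
    - δ * x univ * (if A = univ then 1 else 0)

/-- Download rate `λ_{A,A'}(x)`: nonzero only when `A ⊏ A'` (i.e. `A ⊆ A'` with
`|A' \ A| = 1`). -/
noncomputable def lam {ι : Type*} [Fintype ι] [DecidableEq ι]
    (β : ℝ) (x : Finset ι → ℝ) (A A' : Finset ι) : ℝ :=
  if A ⊆ A' ∧ (A' \ A).card = 1 then
    β * x A * ∑ C ∈ univ.filter (fun C => A' ⊆ C), x C / ((C \ A).card : ℝ)
  else 0

/-- Swap rate `μ_{A,B}(x)`: nonzero only when `A ≁ B` (neither contains the other). -/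
noncomputable def mu {ι : Type*} [DecidableEq ι]
    (γ : ℝ) (x : Finset ι → ℝ) (A B : Finset ι) : ℝ :=
  if ¬ A ⊆ B ∧ ¬ B ⊆ A then
    γ * x A * x B / (((A \ B).card : ℝ) * ((B \ A).card : ℝ))
  else 0

/-- The indicator `D(A,A',B,B') = 1(A ⊏ A', A'\A ⊆ B, B ⊏ B', B'\B ⊆ A)`. -/
def Dind {ι : Type*} [DecidableEq ι] (A A' B B' : Finset ι) : ℝ :=
  if A ⊆ A' ∧ (A' \ A).card = 1 ∧ A' \ A ⊆ B ∧ B ⊆ B' ∧ (B' \ B).card = 1 ∧ B' \ B ⊆ A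
  then 1 else 0

section Helpers

variable {ι : Type*} [Fintype ι] [DecidableEq ι]

/-- Reindex a sum over the covers of `G` by the elements not in `G`. -/
lemma sum_cover (G : Finset ι) (f : Finset ι → ℝ) :
    ∑ A ∈ univ.filter (fun A => G ⊆ A ∧ (A \ G).card = 1), f A
      = ∑ a ∈ Gᶜ, f (insert a G) := by
  refine (Finset.sum_bij (fun a _ => insert a G) ?_ ?_ ?_ ?_).symm
  · intro a ha
    simp only [mem_compl] at ha
    simp only [mem_filter, mem_univ, true_and]
    exact ⟨subset_insert _ _, by rw [insert_sdiff_cancel ha, card_singleton]⟩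
  · intro a ha b hb h
    simp only [mem_compl] at ha hb
    have : a ∈ insert b G := h ▸ mem_insert_self a G
    rcases mem_insert.1 this with h' | h'
    · exact h'
    · exact absurd h' ha
  · intro A hA
    simp only [mem_filter, mem_univ, true_and] at hA
    obtain ⟨a, ha⟩ := card_eq_one.1 hA.2
    have haA : a ∈ A \ G := ha ▸ mem_singleton_self a
    refine ⟨a, by simp [mem_compl, (mem_sdiff.1 haA).2], ?_⟩
    show insert a G = A
    rw [insert_eq, ← ha, sdiff_union_of_subset hA.1]
  · intro a ha; rfl

/-- Reindex a sum over the subsets covered by `G` by the elements of `G`. -/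
lemma sum_cocover (G : Finset ι) (f : Finset ι → ℝ) :
    ∑ A ∈ univ.filter (fun A => A ⊆ G ∧ (G \ A).card = 1), f A
      = ∑ a ∈ G, f (G.erase a) := by
  refine (Finset.sum_bij (fun a _ => G.erase a) ?_ ?_ ?_ ?_).symm
  · intro a ha
    simp only [mem_filter, mem_univ, true_and]
    exact ⟨erase_subset _ _, by rw [sdiff_erase_self ha, card_singleton]⟩
  · intro a ha b hb h
    by_contra hab
    have : a ∈ G.erase b := mem_erase.2 ⟨hab, ha⟩
    rw [← h] at this
    exact (notMem_erase a G) this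
  · intro A hA
    simp only [mem_filter, mem_univ, true_and] at hA
    obtain ⟨a, ha⟩ := card_eq_one.1 hA.2
    have haA : a ∈ G \ A := ha ▸ mem_singleton_self a
    refine ⟨a, (mem_sdiff.1 haA).1, ?_⟩
    show G.erase a = A
    rw [erase_eq, ← ha, sdiff_sdiff_self_left, inter_eq_right.2 hA.1]
  · intro a ha; rfl

/-- Counting covers of `G` whose extra element lies in `B`. -/
lemma count_cover (G B : Finset ι) :
    ∑ A : Finset ι, (if G ⊆ A ∧ (A \ G).card = 1 ∧ A \ G ⊆ B then (1 : ℝ) else 0)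
      = ((B \ G).card : ℝ) := by
  have h1 : ∀ A : Finset ι,
      (if G ⊆ A ∧ (A \ G).card = 1 ∧ A \ G ⊆ B then (1 : ℝ) else 0)
        = if G ⊆ A ∧ (A \ G).card = 1 then (if A \ G ⊆ B then (1 : ℝ) else 0) else 0 := by
    intro A; split_ifs <;> tauto
  simp only [h1]
  rw [← Finset.sum_filter, sum_cover]
  have h2 : ∀ a ∈ Gᶜ, (if insert a G \ G ⊆ B then (1 : ℝ) else 0)
      = if a ∈ B then (1 : ℝ) else 0 := by
    intro a ha
    simp only [insert_sdiff_cancel (mem_compl.1 ha), singleton_subset_iff]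
  rw [Finset.sum_congr rfl h2, Finset.sum_boole]
  congr 1
  have : Gᶜ.filter (fun a => a ∈ B) = B \ G := by
    ext a; simp [mem_sdiff, and_comm]
  rw [this]

/-- Factor the indicator `Dind` into two independent indicators. -/
lemma Dind_eq (A A' B B' : Finset ι) :
    Dind A A' B B'
      = (if A ⊆ A' ∧ (A' \ A).card = 1 ∧ A' \ A ⊆ B then (1 : ℝ) else 0)
        * (if B ⊆ B' ∧ (B' \ B).card = 1 ∧ B' \ B ⊆ A then (1 : ℝ) else 0) := by
  unfold Dind
  split_ifs <;> first | tauto | norm_num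

end Helpers

section MainLemmas

variable {ι : Type*} [Fintype ι] [DecidableEq ι]

lemma lam_out (β : ℝ) (x : Finset ι → ℝ) (G : Finset ι) :
    ∑ A' : Finset ι, lam β x G A'
      = β * x G * ∑ B ∈ univ.filter (fun B => G ⊂ B), x B := by
  unfold lam
  rw [← Finset.sum_filter, sum_cover, ← Finset.mul_sum]
  congr 1
  have h1 : ∀ a ∈ Gᶜ,
      (∑ C ∈ univ.filter (fun C => insert a G ⊆ C), x C / ((C \ G).card : ℝ))
        = ∑ C : Finset ι, (if insert a G ⊆ C then x C / ((C \ G).card : ℝ) else 0) := by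
    intro a _; rw [Finset.sum_filter]
  rw [Finset.sum_congr rfl h1, Finset.sum_comm]
  have h2 : ∀ C : Finset ι,
      (∑ a ∈ Gᶜ, if insert a G ⊆ C then x C / ((C \ G).card : ℝ) else 0)
        = if G ⊂ C then x C else 0 := by
    intro C
    by_cases hGC : G ⊂ C
    · rw [if_pos hGC]
      have hsub : G ⊆ C := hGC.subset
      have h3 : ∀ a ∈ Gᶜ, (if insert a G ⊆ C then x C / ((C \ G).card : ℝ) else 0)
          = if a ∈ C then x C / ((C \ G).card : ℝ) else 0 := by
        intro a _
        congr 1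
        simp [insert_subset_iff, hsub]
      rw [Finset.sum_congr rfl h3, ← Finset.sum_filter]
      have hset : Gᶜ.filter (fun a => a ∈ C) = C \ G := by
        ext a; simp [mem_sdiff, and_comm]
      rw [hset, Finset.sum_const, nsmul_eq_mul]
      have hne : ((C \ G).card : ℝ) ≠ 0 := by
        have hno : (C \ G).Nonempty := sdiff_nonempty.2 fun h =>
          hGC.ne (Finset.Subset.antisymm hsub h)
        exact Nat.cast_ne_zero.2 (card_pos.2 hno).ne'
      field_simp
    · rw [if_neg hGC]
      apply Finset.sum_eq_zero
      intro a ha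
      rw [if_neg]
      intro h
      rw [insert_subset_iff] at h
      exact hGC (Finset.ssubset_iff_subset_ne.2 ⟨h.2, fun hEq => (mem_compl.1 ha) (hEq ▸ h.1)⟩)
  rw [Finset.sum_congr rfl fun C _ => h2 C, ← Finset.sum_filter]

lemma lam_in (β : ℝ) (x : Finset ι → ℝ) (G : Finset ι) :
    ∑ A : Finset ι, lam β x A G
      = β * ∑ B ∈ univ.filter (fun B => G ⊆ B),
          (∑ a ∈ G, x (G.erase a)) * x B / (1 + ((B \ G).card : ℝ)) := by
  unfold lam
  rw [← Finset.sum_filter, sum_cocover]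
  have key : ∀ a ∈ G,
      β * x (G.erase a) * ∑ C ∈ univ.filter (fun C => G ⊆ C), x C / ((C \ G.erase a).card : ℝ)
        = β * ∑ C ∈ univ.filter (fun C => G ⊆ C),
            x (G.erase a) * (x C / (1 + ((C \ G).card : ℝ))) := by
    intro a ha
    rw [Finset.mul_sum, Finset.mul_sum]
    apply Finset.sum_congr rfl
    intro C hC
    simp only [mem_filter, mem_univ, true_and] at hC
    have haC : a ∈ C := hC ha
    have hcard : ((C \ G.erase a).card : ℝ) = 1 + ((C \ G).card : ℝ) := by
      rw [sdiff_erase haC, card_insert_of_notMem (by simp [ha])]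
      push_cast; ring
    rw [hcard]; ring
  rw [Finset.sum_congr rfl key, ← Finset.mul_sum]
  congr 1
  rw [Finset.sum_comm]
  apply Finset.sum_congr rfl
  intro B _
  rw [← Finset.sum_mul, mul_div_assoc]

lemma mu_out (γ : ℝ) (x : Finset ι → ℝ) (G : Finset ι) :
    ∑ A' : Finset ι, ∑ B : Finset ι, ∑ B' : Finset ι, mu γ x G B * Dind G A' B B'
      = γ * x G * ∑ B ∈ univ.filter (fun B => ¬ G ⊆ B ∧ ¬ B ⊆ G), x B := by
  rw [Finset.sum_comm]
  have key : ∀ B : Finset ι,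
      (∑ A' : Finset ι, ∑ B' : Finset ι, mu γ x G B * Dind G A' B B')
        = if ¬ G ⊆ B ∧ ¬ B ⊆ G then γ * x G * x B else 0 := by
    intro B
    have step : (∑ A' : Finset ι, ∑ B' : Finset ι, mu γ x G B * Dind G A' B B')
        = mu γ x G B * (((B \ G).card : ℝ) * ((G \ B).card : ℝ)) := by
      simp only [Dind_eq]
      have h1 : ∀ A' : Finset ι,
          (∑ B' : Finset ι, mu γ x G B
            * ((if G ⊆ A' ∧ (A' \ G).card = 1 ∧ A' \ G ⊆ B then (1 : ℝ) else 0)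
              * (if B ⊆ B' ∧ (B' \ B).card = 1 ∧ B' \ B ⊆ G then (1 : ℝ) else 0)))
          = mu γ x G B * (if G ⊆ A' ∧ (A' \ G).card = 1 ∧ A' \ G ⊆ B then (1 : ℝ) else 0)
              * ((G \ B).card : ℝ) := by
        intro A'
        simp only [← mul_assoc]
        rw [← Finset.mul_sum, count_cover B G]
      rw [Finset.sum_congr rfl fun A' _ => h1 A']
      have h2 : (∑ A' : Finset ι, mu γ x G B
            * (if G ⊆ A' ∧ (A' \ G).card = 1 ∧ A' \ G ⊆ B then (1 : ℝ) else 0)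
            * ((G \ B).card : ℝ))
          = mu γ x G B * (∑ A' : Finset ι,
              (if G ⊆ A' ∧ (A' \ G).card = 1 ∧ A' \ G ⊆ B then (1 : ℝ) else 0))
            * ((G \ B).card : ℝ) := by
        rw [← Finset.sum_mul, ← Finset.mul_sum]
      rw [h2, count_cover G B]; ring
    rw [step]
    unfold mu
    split_ifs with h
    · have hp : ((G \ B).card : ℝ) ≠ 0 :=
        Nat.cast_ne_zero.2 (card_pos.2 (sdiff_nonempty.2 h.1)).ne'
      have hq : ((B \ G).card : ℝ) ≠ 0 :=
        Nat.cast_ne_zero.2 (card_pos.2 (sdiff_nonempty.2 h.2)).ne'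
      rw [div_mul_eq_mul_div, mul_comm (((B \ G).card : ℝ)) (((G \ B).card : ℝ)),
        mul_div_cancel_right₀ _ (mul_ne_zero hp hq)]
    · simp
  rw [Finset.sum_congr rfl fun B _ => key B, ← Finset.sum_filter, ← Finset.mul_sum]

lemma mu_in (γ : ℝ) (x : Finset ι → ℝ) (G : Finset ι) :
    ∑ A : Finset ι, ∑ B : Finset ι, ∑ B' : Finset ι, mu γ x A B * Dind A G B B'
      = γ * ∑ B ∈ univ.filter (fun B => ¬ G ⊆ B),
          (∑ a ∈ G ∩ B, x (G.erase a)) * x B / (1 + ((B \ G).card : ℝ)) := by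
  have step1 : ∀ A B : Finset ι,
      (∑ B' : Finset ι, mu γ x A B * Dind A G B B')
        = if A ⊆ G ∧ (G \ A).card = 1 then
            mu γ x A B * (if G \ A ⊆ B then (1 : ℝ) else 0) * ((A \ B).card : ℝ)
          else 0 := by
    intro A B
    simp only [Dind_eq]
    have h0 : (∑ B' : Finset ι, mu γ x A B
        * ((if A ⊆ G ∧ (G \ A).card = 1 ∧ G \ A ⊆ B then (1 : ℝ) else 0)
          * (if B ⊆ B' ∧ (B' \ B).card = 1 ∧ B' \ B ⊆ A then (1 : ℝ) else 0)))
        = mu γ x A B * (if A ⊆ G ∧ (G \ A).card = 1 ∧ G \ A ⊆ B then (1 : ℝ) else 0)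
          * ((A \ B).card : ℝ) := by
      simp only [← mul_assoc]
      rw [← Finset.mul_sum, count_cover B A]
    rw [h0]
    split_ifs <;> first | tauto | ring
  simp only [step1]
  have swap_ite : ∀ A : Finset ι,
      (∑ B : Finset ι, if A ⊆ G ∧ (G \ A).card = 1 then
          mu γ x A B * (if G \ A ⊆ B then (1 : ℝ) else 0) * ((A \ B).card : ℝ) else 0)
        = if A ⊆ G ∧ (G \ A).card = 1 then
            (∑ B : Finset ι,
              mu γ x A B * (if G \ A ⊆ B then (1 : ℝ) else 0) * ((A \ B).card : ℝ))
          else 0 := by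
    intro A
    by_cases h : A ⊆ G ∧ (G \ A).card = 1 <;> simp [h]
  rw [Finset.sum_congr rfl fun A _ => swap_ite A, ← Finset.sum_filter, sum_cocover]
  have key2 : ∀ a ∈ G, ∀ B : Finset ι,
      mu γ x (G.erase a) B * (if G \ G.erase a ⊆ B then (1 : ℝ) else 0)
          * ((G.erase a \ B).card : ℝ)
        = if ¬ G ⊆ B ∧ a ∈ B then
            γ * x (G.erase a) * x B / (1 + ((B \ G).card : ℝ)) else 0 := by
    intro a ha B
    simp only [sdiff_erase_self ha, singleton_subset_iff]
    by_cases haB : a ∈ B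
    · simp only [haB, if_true, and_true, mul_one]
      have h1 : G.erase a ⊆ B ↔ G ⊆ B := by
        constructor
        · intro h y hy
          by_cases hya : y = a
          · exact hya ▸ haB
          · exact h (mem_erase.2 ⟨hya, hy⟩)
        · intro h; exact (erase_subset a G).trans h
      have h2 : ¬ B ⊆ G.erase a := fun h => (notMem_erase a G) (h haB)
      have h3 : G.erase a \ B = G \ B := by
        ext y
        simp only [mem_sdiff, mem_erase]
        constructor
        · rintro ⟨⟨_, hy⟩, hB⟩; exact ⟨hy, hB⟩
        · rintro ⟨hy, hB⟩
          exact ⟨⟨fun hEq => hB (hEq ▸ haB), hy⟩, hB⟩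
      have h4 : B \ G.erase a = insert a (B \ G) := sdiff_erase haB
      unfold mu
      by_cases hGB : G ⊆ B
      · rw [if_neg (fun hc => hc.1 (h1.2 hGB)), if_neg (fun hc => hc (by exact hGB)), zero_mul]
      · have hcond : ¬ G.erase a ⊆ B ∧ ¬ B ⊆ G.erase a := ⟨fun h => hGB (h1.1 h), h2⟩
        rw [if_pos hcond, if_pos hGB, h3, h4,
          card_insert_of_notMem (by simp [mem_sdiff, ha])]
        have hp : ((G \ B).card : ℝ) ≠ 0 :=
          Nat.cast_ne_zero.2 (card_pos.2 (sdiff_nonempty.2 hGB)).ne'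
        have hq : (1 : ℝ) + ((B \ G).card : ℝ) ≠ 0 := by positivity
        push_cast
        field_simp
        ring
    · simp [haB]
  rw [Finset.sum_congr rfl fun a ha => Finset.sum_congr rfl fun B _ => key2 a ha B,
    Finset.sum_comm]
  have last : ∀ B : Finset ι,
      (∑ a ∈ G, if ¬ G ⊆ B ∧ a ∈ B then
          γ * x (G.erase a) * x B / (1 + ((B \ G).card : ℝ)) else 0)
        = if ¬ G ⊆ B then
            γ * ((∑ a ∈ G ∩ B, x (G.erase a)) * x B / (1 + ((B \ G).card : ℝ)))
          else 0 := by
    intro B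
    by_cases hB : G ⊆ B
    · simp [hB]
    · simp only [hB, not_false_iff, true_and, if_true]
      rw [Finset.sum_mul, Finset.sum_div, Finset.mul_sum]
      have hset : G ∩ B = G.filter (fun a => a ∈ B) := by
        ext y; simp [mem_inter]
      rw [hset, Finset.sum_filter]
      apply Finset.sum_congr rfl
      intro a _
      split_ifs with h
      · ring
      · rfl
  rw [Finset.sum_congr rfl fun B _ => last B, ← Finset.sum_filter, Finset.mul_sum]

end MainLemmas

/-- The drift of the BitTorrent Markov chain equals the fluid vector field. -/
theorem drift_eq_vfield
    {ι : Type*} [Fintype ι] [Nonempty ι] [DecidableEq ι]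
    (α : Finset ι → ℝ) (hα : ∀ A, 0 ≤ α A)
    (β γ δ : ℝ) (hβ : 0 < β) (hγ : 0 ≤ γ) (hδ : 0 ≤ δ)
    (x : Finset ι → ℝ) (G : Finset ι) :
    α G - δ * x univ * (if G = univ then 1 else 0)
      - (∑ A' : Finset ι, lam β x G A')
      + (∑ A : Finset ι, lam β x A G)
      - (∑ A' : Finset ι, ∑ B : Finset ι, ∑ B' : Finset ι, mu γ x G B * Dind G A' B B')
      + (∑ A : Finset ι, ∑ B : Finset ι, ∑ B' : Finset ι, mu γ x A B * Dind A G B B')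
      = vfield α β γ δ x G := by
  rw [lam_out, lam_in, mu_out, mu_in]
  unfold vfield
  ring
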